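/- Let m, N₀, H₀, r₀, 𝔥 be real numbers with 𝔥 > 0, N₀ > 0, 𝔥·r₀ = √3, H₀ = (2/3)·𝔥, N₀ = m·𝔥, 2·N₀ ≤ r₀·H₀, and m·(H₀·N₀ + 4·m/r₀²) ≥ 1 − N₀². Then N₀ = 1/√3, N₀² = 1 − 2·m/r₀, H₀ = 2·N₀/r₀, m = 1/(√3·𝔥), and r₀ = 3·m. -/

import Mathlib

/-- The algebraic endgame of the photon sphere uniqueness proof: the
Gauß–Bonnet relations `𝔥r₀ = √3`, `H₀ = 2𝔥/3`, `N₀ = m𝔥` and the two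
integrated Israel-type inequalities force all data to their Schwarzschild
values: `N₀ = 1/√3`, `N₀² = 1 − 2m/r₀`, `H₀ = 2N₀/r₀`, `m = 1/(√3 𝔥)`,
`r₀ = 3m`. -/
theorem photon_sphere_schwarzschild_values
    (m N₀ H₀ r₀ 𝔥 : ℝ)
    (h𝔥 : 𝔥 > 0) (hN₀ : N₀ > 0)
    (hhr : 𝔥 * r₀ = Real.sqrt 3)
    (hH : H₀ = (2 / 3) * 𝔥)
    (hN : N₀ = m * 𝔥)
    (hineq1 : 2 * N₀ ≤ r₀ * H₀)
    (hineq2 : m * (H₀ * N₀ + 4 * m / r₀ ^ 2) ≥ 1 - N₀ ^ 2) :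
    N₀ = 1 / Real.sqrt 3 ∧ N₀ ^ 2 = 1 - 2 * m / r₀ ∧ H₀ = 2 * N₀ / r₀ ∧
      m = 1 / (Real.sqrt 3 * 𝔥) ∧ r₀ = 3 * m := by
  have hs3 : Real.sqrt 3 > 0 := Real.sqrt_pos.mpr (by norm_num)
  have hs2 : Real.sqrt 3 ^ 2 = 3 := Real.sq_sqrt (by norm_num)
  have hr0 : r₀ > 0 := by
    nlinarith [mul_pos h𝔥 hs3]
  have hm : m = N₀ / 𝔥 := by field_simp at hN ⊢; linarith
  -- upper bound: 2N₀ ≤ r₀H₀ = 2√3/3·... 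
  have hub : N₀ ≤ Real.sqrt 3 / 3 := by
    have : r₀ * H₀ = (2/3) * Real.sqrt 3 := by
      rw [hH]; nlinarith
    nlinarith
  -- ineq2 simplifies to 2N₀² ≥ 1 - N₀²
  have hlb : 3 * N₀ ^ 2 ≥ 1 := by
    have h4 : m * (H₀ * N₀ + 4 * m / r₀ ^ 2) = 2 * N₀ ^ 2 := by
      rw [hm, hH]
      have hr2 : r₀ ^ 2 = 3 / 𝔥 ^ 2 := by
        have : (𝔥 * r₀) ^ 2 = 3 := by rw [hhr]; exact hs2
        field_simp; nlinarith
      rw [hr2]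
      field_simp
      ring
    rw [h4] at hineq2
    linarith
  have hN0 : N₀ = 1 / Real.sqrt 3 := by
    have h1 : N₀ ^ 2 = 1 / 3 := by nlinarith
    have h2 : (1 / Real.sqrt 3) ^ 2 = 1 / 3 := by
      rw [div_pow, hs2]; norm_num
    nlinarith [div_pos (by norm_num : (0:ℝ) < 1) hs3]
  have hmval : m = 1 / (Real.sqrt 3 * 𝔥) := by
    rw [hm, hN0]; field_simp
  have hr0val : r₀ = 3 * m := by
    have : r₀ = Real.sqrt 3 / 𝔥 := by field_simp; linarith
    rw [this, hmval]; field_simp; nlinarith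
  have hmpos : m > 0 := by
    rw [hm]; positivity
  have hrv : r₀ = Real.sqrt 3 / 𝔥 := by field_simp; linarith
  refine ⟨hN0, ?_, ?_, hmval, hr0val⟩
  · rw [hN0, div_pow, hs2, hr0val]
    rw [show 2 * m / (3 * m) = 2 / 3 by field_simp]
    norm_num
  · rw [hH, hN0, hrv]
    have h3 : Real.sqrt 3 * Real.sqrt 3 = 3 := Real.mul_self_sqrt (by norm_num)
    field_simp
    exact hs2
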